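/- Let n ≥ 3 be an odd integer and η = e^{2π√−1/n}. Then Σ_{k=0}^{n−1} 1/((1 + η^k)(1 + η̄^k)) = n²/4, where η̄ denotes the complex conjugate of η. -/

import Mathlib

private lemma polyDerivFinsetProd {R : Type*} [CommRing R] {ι : Type*} [DecidableEq ι]
    (s : Finset ι) (f : ι → Polynomial R) :
    Polynomial.derivative (∏ i ∈ s, f i) =
      ∑ i ∈ s, (∏ j ∈ s.erase i, f j) * Polynomial.derivative (f i) := by
  induction s using Finset.induction_on with
  | empty => simp
  | insert a s ha ih =>
    rw [Finset.prod_insert ha, Polynomial.derivative_mul, ih, Finset.sum_insert ha,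
      Finset.erase_insert ha, Finset.mul_sum]
    congr 1
    · ring
    · apply Finset.sum_congr rfl
      intro i hi
      rw [Finset.erase_insert_of_ne (by rintro rfl; exact ha hi),
        Finset.prod_insert (fun h => ha (Finset.mem_of_mem_erase h))]
      ring

/-- for odd `n ≥ 3` and `η = e^{2π√-1/n}`,
`Σ_{k=0}^{n-1} 1/((1+η^k)(1+η̄^k)) = n²/4`, where `η̄` is the complex
conjugate of `η`. -/
theorem sum_inv_one_add_root_sq (n : ℕ) (hn : 3 ≤ n) (hodd : Odd n) (η : ℂ)
    (hη : η = Complex.exp (2 * Real.pi * Complex.I / n)) :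
    ∑ k ∈ Finset.range n,
      1 / ((1 + η ^ k) * (1 + (starRingEnd ℂ η) ^ k)) = (n : ℂ) ^ 2 / 4 := by
  open Polynomial Finset in
  have hn0 : 0 < n := by omega
  have hprim : IsPrimitiveRoot η n := by
    rw [hη]; exact Complex.isPrimitiveRoot_exp n (by omega)
  set S := Polynomial.nthRootsFinset n (1 : ℂ) with hS
  -- basic facts about roots
  have hmem : ∀ μ ∈ S, μ ^ n = 1 := fun μ hμ => (Polynomial.mem_nthRootsFinset hn0 1).1 hμ
  have hne : ∀ μ ∈ S, (-1 : ℂ) - μ ≠ 0 := by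
    intro μ hμ h
    have hμn := hmem μ hμ
    have : μ = -1 := by linear_combination -h
    rw [this, hodd.neg_one_pow] at hμn
    norm_num at hμn
  have hfact : (X : ℂ[X]) ^ n - 1 = ∏ μ ∈ S, (X - C μ) :=
    Polynomial.X_pow_sub_one_eq_prod hn0 hprim
  -- evaluate the product at -1
  have hP : ∏ μ ∈ S, (-1 - μ) = -2 := by
    have h := (congrArg (Polynomial.eval (-1 : ℂ)) hfact).symm
    simp only [Polynomial.eval_prod, Polynomial.eval_sub, Polynomial.eval_X,
      Polynomial.eval_C, Polynomial.eval_pow, Polynomial.eval_one, hodd.neg_one_pow] at h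
    rw [h]; norm_num
  -- first derivative at -1
  have hd1 : Polynomial.derivative ((X : ℂ[X]) ^ n - 1) =
      ∑ μ ∈ S, ∏ ν ∈ S.erase μ, (X - C ν) := by
    rw [hfact, polyDerivFinsetProd]
    simp
  have h1 : ∑ μ ∈ S, ∏ ν ∈ S.erase μ, (-1 - ν) = (n : ℂ) := by
    have h := (congrArg (Polynomial.eval (-1 : ℂ)) hd1).symm
    have he : Even (n - 1) := Nat.Odd.sub_odd hodd odd_one
    simp only [Polynomial.derivative_sub, Polynomial.derivative_one, Polynomial.derivative_X_pow,
      sub_zero, Polynomial.eval_finset_sum, Polynomial.eval_prod, Polynomial.eval_sub,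
      Polynomial.eval_X, Polynomial.eval_C, Polynomial.eval_mul, Polynomial.eval_pow,
      he.neg_one_pow, mul_one] at h
    exact h
  -- second derivative at -1
  have hd2 : ∑ μ ∈ S, ∑ ν ∈ S.erase μ, ∏ l ∈ (S.erase μ).erase ν, (-1 - l)
      = -((n : ℂ) * ((n : ℂ) - 1)) := by
    have h := congrArg (Polynomial.eval (-1 : ℂ)) (congrArg Polynomial.derivative hd1)
    have hon2 : Odd (n - 2) := by
      obtain ⟨m, rfl⟩ := hodd; exact ⟨m - 1, by omega⟩
    have hcast : ((n - 1 : ℕ) : ℂ) = (n : ℂ) - 1 := by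
      push_cast [Nat.cast_sub (by omega : 1 ≤ n)]; ring
    simp only [Polynomial.derivative_sub, Polynomial.derivative_one, Polynomial.derivative_X_pow,
      sub_zero, Polynomial.derivative_C_mul, Polynomial.derivative_sum,
      polyDerivFinsetProd, Polynomial.derivative_sub, Polynomial.derivative_X,
      Polynomial.derivative_C, sub_zero, mul_one, Polynomial.eval_finset_sum,
      Polynomial.eval_prod, Polynomial.eval_sub, Polynomial.eval_X, Polynomial.eval_C,
      Polynomial.eval_mul, Polynomial.eval_pow, Nat.sub_sub, hon2.neg_one_pow, hcast] at h
    rw [← h]; ring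
  -- pointwise product formulas
  have key1 : ∀ μ ∈ S, ∏ ν ∈ S.erase μ, (-1 - ν) = -2 / (-1 - μ) := by
    intro μ hμ
    have h := Finset.mul_prod_erase S (fun ν => -1 - ν) hμ
    rw [hP] at h
    rw [eq_div_iff (hne μ hμ), mul_comm]
    exact h
  have key2 : ∀ μ ∈ S, ∀ ν ∈ S.erase μ,
      ∏ l ∈ (S.erase μ).erase ν, (-1 - l) = -2 / ((-1 - μ) * (-1 - ν)) := by
    intro μ hμ ν hν
    have hν' : ν ∈ S := Finset.mem_of_mem_erase hν
    have h := Finset.mul_prod_erase (S.erase μ) (fun l => -1 - l) hν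
    rw [key1 μ hμ] at h
    rw [eq_div_iff (hne μ hμ)] at h
    rw [eq_div_iff (mul_ne_zero (hne μ hμ) (hne ν hν'))]
    linear_combination h
  -- the two key sums
  have hS1 : ∑ μ ∈ S, 1 / (-1 - μ) = -((n : ℂ) / 2) := by
    rw [Finset.sum_congr rfl key1] at h1
    have h2 : ∑ μ ∈ S, 1 / (-1 - μ) = (-1/2) * ∑ μ ∈ S, -2 / (-1 - μ) := by
      rw [Finset.mul_sum]
      exact Finset.sum_congr rfl fun μ _ => by ring
    rw [h2, h1]; ring
  have hD : ∑ μ ∈ S, ∑ ν ∈ S.erase μ, (1 / (-1 - μ)) * (1 / (-1 - ν))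
      = (n : ℂ) * ((n : ℂ) - 1) / 2 := by
    have h2 : ∀ μ ∈ S, ∑ ν ∈ S.erase μ, (1 / (-1 - μ)) * (1 / (-1 - ν))
        = (-1/2) * ∑ ν ∈ S.erase μ, ∏ l ∈ (S.erase μ).erase ν, (-1 - l) := by
      intro μ hμ
      rw [Finset.mul_sum]
      refine Finset.sum_congr rfl fun ν hν => ?_
      rw [key2 μ hμ ν hν, div_mul_div_comm, one_mul]
      ring
    rw [Finset.sum_congr rfl h2, ← Finset.mul_sum, hd2]
    ring
  have hS2 : ∑ μ ∈ S, (1 / (-1 - μ)) ^ 2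
      = (n : ℂ) ^ 2 / 4 - (n : ℂ) * ((n : ℂ) - 1) / 2 := by
    have hexp : (∑ μ ∈ S, 1 / (-1 - μ)) * (∑ ν ∈ S, 1 / (-1 - ν))
        = ∑ μ ∈ S, ∑ ν ∈ S, (1 / (-1 - μ)) * (1 / (-1 - ν)) := Finset.sum_mul_sum _ _ _ _
    have hsplit : ∀ μ ∈ S, ∑ ν ∈ S, (1 / (-1 - μ)) * (1 / (-1 - ν))
        = (1 / (-1 - μ)) ^ 2 + ∑ ν ∈ S.erase μ, (1 / (-1 - μ)) * (1 / (-1 - ν)) := by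
      intro μ hμ
      rw [← Finset.add_sum_erase _ _ hμ, sq]
    rw [Finset.sum_congr rfl hsplit, Finset.sum_add_distrib, hD, hS1] at hexp
    linear_combination -hexp
  -- transfer the sum over `range n` to a sum over `S`
  have himg : Finset.image (η ^ ·) (Finset.range n) = S := by
    apply Finset.eq_of_subset_of_card_le
    · intro x hx
      obtain ⟨k, hk, rfl⟩ := Finset.mem_image.1 hx
      refine (Polynomial.mem_nthRootsFinset hn0 1).2 ?_
      rw [← pow_mul, mul_comm, pow_mul, hprim.pow_eq_one, one_pow]
    · rw [hprim.card_nthRootsFinset,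
        Finset.card_image_of_injOn hprim.injOn_pow, Finset.card_range]
  have htrans : ∀ f : ℂ → ℂ, ∑ k ∈ Finset.range n, f (η ^ k) = ∑ μ ∈ S, f μ := by
    intro f
    rw [← himg, Finset.sum_image (fun x hx y hy h =>
      hprim.injOn_pow (Finset.mem_coe.2 hx) (Finset.mem_coe.2 hy) h)]
  -- the conjugate is the inverse
  have hconj : (starRingEnd ℂ) η = η⁻¹ := by
    rw [hη, ← Complex.exp_conj, ← Complex.exp_neg]
    congr 1
    simp only [map_div₀, map_mul, Complex.conj_I, Complex.conj_ofNat, Complex.conj_natCast]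
    rw [Complex.conj_ofReal]
    ring
  -- rewrite each summand
  have hηk : ∀ k : ℕ, η ^ k ∈ S := by
    intro k
    refine (Polynomial.mem_nthRootsFinset hn0 1).2 ?_
    rw [← pow_mul, mul_comm, pow_mul, hprim.pow_eq_one, one_pow]
  have hg : ∀ μ ∈ S, 1 / ((1 + μ) * (1 + μ⁻¹)) = -(1 / (-1 - μ)) - (1 / (-1 - μ)) ^ 2 := by
    intro μ hμ
    have h0 : μ ≠ 0 := Polynomial.ne_zero_of_mem_nthRootsFinset one_ne_zero hμ
    have h1' : (-1 : ℂ) - μ ≠ 0 := hne μ hμ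
    have h2' : (1 : ℂ) + μ ≠ 0 := fun h => h1' (by linear_combination -h)
    have hinv : (1 + μ) * (1 + μ⁻¹) = (1 + μ) ^ 2 / μ := by
      field_simp; ring
    rw [hinv, one_div_div, show (-1 : ℂ) - μ = -(1 + μ) from by ring, div_neg, neg_neg,
      neg_pow, div_pow, one_pow]
    rw [div_eq_iff (pow_ne_zero 2 h2')]
    field_simp
    ring
  calc ∑ k ∈ Finset.range n, 1 / ((1 + η ^ k) * (1 + (starRingEnd ℂ η) ^ k))
      = ∑ k ∈ Finset.range n, 1 / ((1 + η ^ k) * (1 + (η ^ k)⁻¹)) := by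
        simp only [hconj, inv_pow]
    _ = ∑ μ ∈ S, 1 / ((1 + μ) * (1 + μ⁻¹)) :=
        htrans (fun μ => 1 / ((1 + μ) * (1 + μ⁻¹)))
    _ = ∑ μ ∈ S, (-(1 / (-1 - μ)) - (1 / (-1 - μ)) ^ 2) := Finset.sum_congr rfl hg
    _ = -∑ μ ∈ S, 1 / (-1 - μ) - ∑ μ ∈ S, (1 / (-1 - μ)) ^ 2 := by
        rw [Finset.sum_sub_distrib, Finset.sum_neg_distrib]
    _ = (n : ℂ) ^ 2 / 4 := by rw [hS1, hS2]; ring
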